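/- arXiv:2007.06764 — 10 statements merged into one kernel-verified Lean document; each statement's English description precedes it below -/
import Mathlib

section
/- Let μ > 0, ρ ∈ (0,1), and K > 2 with ρ < (K−2)/(2K−2). Then the preemptive-resume cost function 𝒞_PR(φ) = (Kρ + (2−K)φρ(1−ρ)) / (2μ(1−ρ)(1−φρ)) is strictly decreasing in φ on [0,1]. -/
/-- Let `μ > 0`, `ρ ∈ (0,1)`, and `K > 2` with `ρ < (K−2)/(2K−2)`.
Then `𝒞_PR(φ) = (Kρ + (2−K)φρ(1−ρ)) / (2μ(1−ρ)(1−φρ))` is strictly decreasing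
in `φ` on `[0,1]`. -/
theorem cost_PR_strictAntiOn (μ ρ K : ℝ) (hμ : 0 < μ) (hρ0 : 0 < ρ) (hρ1 : ρ < 1)
    (hK : 2 < K) (hρK : ρ < (K - 2) / (2 * K - 2)) :
    StrictAntiOn
      (fun φ : ℝ => (K * ρ + (2 - K) * φ * ρ * (1 - ρ)) / (2 * μ * (1 - ρ) * (1 - φ * ρ)))
      (Set.Icc (0 : ℝ) 1) := by
  intro a ha b hb hab
  have haρ : a * ρ < 1 := by nlinarith [ha.1, ha.2]
  have hbρ : b * ρ < 1 := by nlinarith [hb.1, hb.2]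
  have hgt : 2 * K - 2 > 0 := by linarith
  have hkey : ρ * (2 * K - 2) < K - 2 := (lt_div_iff₀ hgt).mp hρK
  have hDa : 0 < 2 * μ * (1 - ρ) * (1 - a * ρ) := by
    have := sub_pos.mpr haρ; have := sub_pos.mpr hρ1; positivity
  have hDb : 0 < 2 * μ * (1 - ρ) * (1 - b * ρ) := by
    have := sub_pos.mpr hbρ; have := sub_pos.mpr hρ1; positivity
  simp only []
  rw [div_lt_div_iff₀ hDb hDa]
  nlinarith [mul_pos hμ (mul_pos hρ0 (sub_pos.mpr hab)),
    mul_pos (mul_pos hμ (mul_pos hρ0 (sub_pos.mpr hab))) (sub_pos.mpr hρ1)]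
end

section
/- Let μ > 0 and K > 2, and set ρ = (K−2)/(2K−2). Then the preemptive-resume cost function 𝒞_PR(φ) = (Kρ + (2−K)φρ(1−ρ)) / (2μ(1−ρ)(1−φρ)) is constant on [0,1], equal to Kρ/(2μ(1−ρ)) for every φ ∈ [0,1]. -/
/-- Let `μ > 0` and `K > 2`, and set `ρ = (K−2)/(2K−2)`. Then
`𝒞_PR(φ)` is constant on `[0,1]`, equal to `Kρ/(2μ(1−ρ))` for every `φ ∈ [0,1]`. -/
theorem cost_PR_constant (μ ρ K : ℝ) (hμ : 0 < μ) (hK : 2 < K)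
    (hρ : ρ = (K - 2) / (2 * K - 2)) :
    ∀ φ ∈ Set.Icc (0 : ℝ) 1,
      (K * ρ + (2 - K) * φ * ρ * (1 - ρ)) / (2 * μ * (1 - ρ) * (1 - φ * ρ)) =
        K * ρ / (2 * μ * (1 - ρ)) := by
  intro φ hφ
  obtain ⟨hφ0, hφ1⟩ := hφ
  have hden : (2 : ℝ) * K - 2 ≠ 0 := by nlinarith
  have hρ0 : 0 ≤ ρ := by
    rw [hρ]; apply div_nonneg <;> nlinarith
  have hρ1 : ρ < 1 := by
    rw [hρ, div_lt_one (by nlinarith)]; nlinarith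
  have hφρ : 1 - φ * ρ ≠ 0 := by
    have : φ * ρ ≤ ρ := by nlinarith
    nlinarith
  have h1 : K * ρ + (2 - K) * φ * ρ * (1 - ρ) = K * ρ * (1 - φ * ρ) := by
    have key : ρ * (2 * K - 2) = K - 2 := by rw [hρ]; exact div_mul_cancel₀ _ hden
    linear_combination (φ * ρ) * key
  rw [h1, show 2 * μ * (1 - ρ) * (1 - φ * ρ) = 2 * μ * (1 - ρ) * (1 - φ * ρ) from rfl,
    mul_div_mul_right _ _ hφρ]
end

section
/- For every ρ ∈ (0,1) and every K with 1 ≤ K ≤ 4, the preemptive-resume revenue function ℛ_PR(φ) = (Kφρ² + (2−K)φ²ρ²(1−ρ)) / (2(1−ρ)(1−φρ)) is strictly increasing in φ on [0,1], so its maximum over [0,1] is ℛ_PR(1) = (Kρ² + (2−K)ρ²(1−ρ)) / (2(1−ρ)²). -/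
/-- For every `ρ ∈ (0,1)` and `1 ≤ K ≤ 4`, the PR revenue function
`ℛ_PR(φ) = (Kφρ² + (2−K)φ²ρ²(1−ρ)) / (2(1−ρ)(1−φρ))` is strictly increasing on `[0,1]`,
so its maximum over `[0,1]` is `ℛ_PR(1) = (Kρ² + (2−K)ρ²(1−ρ)) / (2(1−ρ)²)`. -/
theorem revenue_PR_max_Kle4 (ρ K : ℝ) (hρ0 : 0 < ρ) (hρ1 : ρ < 1) (hK1 : 1 ≤ K)
    (hK4 : K ≤ 4) :
    StrictMonoOn
      (fun φ : ℝ =>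
        (K * φ * ρ ^ 2 + (2 - K) * φ ^ 2 * ρ ^ 2 * (1 - ρ)) / (2 * (1 - ρ) * (1 - φ * ρ)))
      (Set.Icc (0 : ℝ) 1) ∧
    (∀ φ ∈ Set.Icc (0 : ℝ) 1,
      (K * φ * ρ ^ 2 + (2 - K) * φ ^ 2 * ρ ^ 2 * (1 - ρ)) / (2 * (1 - ρ) * (1 - φ * ρ)) ≤
        (K * ρ ^ 2 + (2 - K) * ρ ^ 2 * (1 - ρ)) / (2 * (1 - ρ) ^ 2)) ∧
    (K * 1 * ρ ^ 2 + (2 - K) * 1 ^ 2 * ρ ^ 2 * (1 - ρ)) / (2 * (1 - ρ) * (1 - 1 * ρ)) =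
      (K * ρ ^ 2 + (2 - K) * ρ ^ 2 * (1 - ρ)) / (2 * (1 - ρ) ^ 2) := by
  have h1ρ : 0 < 1 - ρ := by linarith
  have hden : ∀ φ : ℝ, φ ∈ Set.Icc (0 : ℝ) 1 → 0 < 2 * (1 - ρ) * (1 - φ * ρ) := by
    intro φ ⟨h0, h1⟩
    have : φ * ρ ≤ 1 * ρ := by nlinarith
    nlinarith
  have hmono : StrictMonoOn
      (fun φ : ℝ =>
        (K * φ * ρ ^ 2 + (2 - K) * φ ^ 2 * ρ ^ 2 * (1 - ρ)) / (2 * (1 - ρ) * (1 - φ * ρ)))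
      (Set.Icc (0 : ℝ) 1) := by
    intro a ha b hb hab
    have hDa := hden a ha
    have hDb := hden b hb
    obtain ⟨ha0, ha1⟩ := ha
    obtain ⟨hb0, hb1⟩ := hb
    rw [div_lt_div_iff₀ hDa hDb]
    have hba : 0 < b - a := by linarith
    -- difference factors as 2(1-ρ)ρ²(b-a)[K + (2-K)(1-ρ)(a+b-ρab)]
    have hx0 : 0 ≤ a + b - ρ * a * b := by
      nlinarith [mul_nonneg ha0 hb0, mul_nonneg (mul_nonneg ha0 hb0) hρ0.le]
    have hx2 : a + b - ρ * a * b ≤ 2 - ρ := by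
      nlinarith [mul_nonneg hρ0.le (mul_nonneg (sub_nonneg.2 ha1) (sub_nonneg.2 hb1)),
        mul_nonneg h1ρ.le (add_nonneg (sub_nonneg.2 ha1) (sub_nonneg.2 hb1))]
    have hkey : 0 < K + (2 - K) * (1 - ρ) * (a + b - ρ * a * b) := by
      rcases le_or_gt K 2 with hK2 | hK2
      · have h0 := mul_nonneg (mul_nonneg (sub_nonneg.2 hK2) h1ρ.le) hx0
        nlinarith
      · have h1 : 0 ≤ (K - 2) * ((1 - ρ) * (2 - ρ - (a + b - ρ * a * b))) :=
          mul_nonneg (by linarith) (mul_nonneg h1ρ.le (by linarith))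
        nlinarith [mul_pos hρ0 (sub_pos.2 hK2), mul_pos (mul_pos hρ0 h1ρ) (sub_pos.2 hK2)]
    nlinarith [mul_pos (mul_pos hba hkey) (mul_pos h1ρ (mul_pos hρ0 hρ0))]
  have heq : (K * 1 * ρ ^ 2 + (2 - K) * 1 ^ 2 * ρ ^ 2 * (1 - ρ)) / (2 * (1 - ρ) * (1 - 1 * ρ)) =
      (K * ρ ^ 2 + (2 - K) * ρ ^ 2 * (1 - ρ)) / (2 * (1 - ρ) ^ 2) := by
    ring_nf
  refine ⟨hmono, ?_, heq⟩
  intro φ hφ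
  have h1 : (1 : ℝ) ∈ Set.Icc (0 : ℝ) 1 := by norm_num
  have := hmono.monotoneOn hφ h1 hφ.2
  simpa [heq] using this.trans_eq heq
end

section
/- Let K > 4 and suppose ρ ∈ (0,1) satisfies ρ ≥ 3/2 − (1/2)√((5K−2)/(K−2)). Then the preemptive-resume revenue function ℛ_PR(φ) = (Kφρ² + (2−K)φ²ρ²(1−ρ)) / (2(1−ρ)(1−φρ)) is monotone increasing in φ on [0,1], and its maximum over [0,1] equals ℛ_PR(1) = (Kρ² + (2−K)ρ²(1−ρ)) / (2(1−ρ)²). -/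
theorem key_ineq_aux (ρ K : ℝ) (hρ0 : 0 < ρ) (hρ1 : ρ < 1) (hK : 4 < K)
    (hρK : 3 / 2 - (1 / 2) * Real.sqrt ((5 * K - 2) / (K - 2)) ≤ ρ) :
    (K - 2) * (1 - ρ) * (2 - ρ) ≤ K := by
  have hK2 : (0:ℝ) < K - 2 := by linarith
  have hargpos : (0:ℝ) ≤ (5 * K - 2) / (K - 2) := by
    apply div_nonneg <;> linarith
  have hs0 : 0 ≤ Real.sqrt ((5 * K - 2) / (K - 2)) := Real.sqrt_nonneg _
  have hs2 : Real.sqrt ((5 * K - 2) / (K - 2)) ^ 2 = (5 * K - 2) / (K - 2) :=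
    Real.sq_sqrt hargpos
  have hs2' : Real.sqrt ((5 * K - 2) / (K - 2)) ^ 2 * (K - 2) = 5 * K - 2 := by
    rw [hs2]; field_simp
  set s := Real.sqrt ((5 * K - 2) / (K - 2)) with hs
  have h1 : 3 / 2 - ρ ≤ s / 2 := by linarith
  have h2 : (3 / 2 - ρ) ^ 2 ≤ (s / 2) ^ 2 := by
    have h3 : 0 ≤ 3 / 2 - ρ := by linarith
    nlinarith
  nlinarith [sq_nonneg s]

/-- Let `K > 4` and `ρ ∈ (0,1)` with `ρ ≥ 3/2 − (1/2)√((5K−2)/(K−2))`.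
Then `ℛ_PR` is monotone increasing on `[0,1]` and its maximum over `[0,1]` equals
`ℛ_PR(1) = (Kρ² + (2−K)ρ²(1−ρ)) / (2(1−ρ)²)`. -/
theorem revenue_PR_max_Kgt4_highload (ρ K : ℝ) (hρ0 : 0 < ρ) (hρ1 : ρ < 1) (hK : 4 < K)
    (hρK : 3 / 2 - (1 / 2) * Real.sqrt ((5 * K - 2) / (K - 2)) ≤ ρ) :
    MonotoneOn
      (fun φ : ℝ =>
        (K * φ * ρ ^ 2 + (2 - K) * φ ^ 2 * ρ ^ 2 * (1 - ρ)) / (2 * (1 - ρ) * (1 - φ * ρ)))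
      (Set.Icc (0 : ℝ) 1) ∧
    (∀ φ ∈ Set.Icc (0 : ℝ) 1,
      (K * φ * ρ ^ 2 + (2 - K) * φ ^ 2 * ρ ^ 2 * (1 - ρ)) / (2 * (1 - ρ) * (1 - φ * ρ)) ≤
        (K * ρ ^ 2 + (2 - K) * ρ ^ 2 * (1 - ρ)) / (2 * (1 - ρ) ^ 2)) ∧
    (K * 1 * ρ ^ 2 + (2 - K) * 1 ^ 2 * ρ ^ 2 * (1 - ρ)) / (2 * (1 - ρ) * (1 - 1 * ρ)) =
      (K * ρ ^ 2 + (2 - K) * ρ ^ 2 * (1 - ρ)) / (2 * (1 - ρ) ^ 2) := by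
  have hK2 : (0:ℝ) < K - 2 := by linarith
  have hkey : (K - 2) * (1 - ρ) * (2 - ρ) ≤ K := key_ineq_aux ρ K hρ0 hρ1 hK hρK
  clear hρK
  have hmono : MonotoneOn
      (fun φ : ℝ =>
        (K * φ * ρ ^ 2 + (2 - K) * φ ^ 2 * ρ ^ 2 * (1 - ρ)) / (2 * (1 - ρ) * (1 - φ * ρ)))
      (Set.Icc (0 : ℝ) 1) := by
    intro a ha b hb hab
    obtain ⟨ha0, ha1⟩ := ha
    obtain ⟨hb0, hb1⟩ := hb
    have haρ : a * ρ ≤ ρ := by nlinarith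
    have hbρ : b * ρ ≤ ρ := by nlinarith
    have hda : 0 < 2 * (1 - ρ) * (1 - a * ρ) := by nlinarith
    have hdb : 0 < 2 * (1 - ρ) * (1 - b * ρ) := by nlinarith
    simp only
    rw [div_le_div_iff₀ hda hdb]
    have hbound : (K - 2) * (1 - ρ) * (a + b - a * b * ρ) ≤ K := by
      have h4 : a + b - a * b * ρ ≤ 2 - ρ := by
        nlinarith [mul_nonneg (by linarith : (0:ℝ) ≤ 1 - a) (by linarith : (0:ℝ) ≤ 1 - b),
          mul_nonneg (by linarith : (0:ℝ) ≤ 1 - ρ) (by nlinarith : (0:ℝ) ≤ 1 - a * b)]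
      nlinarith [mul_pos hK2 (by linarith : (0:ℝ) < 1 - ρ)]
    have hfac : 0 ≤ 2 * (1 - ρ) * ρ ^ 2 * (b - a) *
        (K + (2 - K) * (1 - ρ) * (a + b - a * b * ρ)) := by
      apply mul_nonneg (mul_nonneg (by nlinarith [sq_nonneg ρ] :
        (0:ℝ) ≤ 2 * (1 - ρ) * ρ ^ 2) (by linarith : (0:ℝ) ≤ b - a))
      nlinarith [hbound]
    have hexp : (K * b * ρ ^ 2 + (2 - K) * b ^ 2 * ρ ^ 2 * (1 - ρ)) * (2 * (1 - ρ) * (1 - a * ρ))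
        - (K * a * ρ ^ 2 + (2 - K) * a ^ 2 * ρ ^ 2 * (1 - ρ)) * (2 * (1 - ρ) * (1 - b * ρ))
        = 2 * (1 - ρ) * ρ ^ 2 * (b - a) * (K + (2 - K) * (1 - ρ) * (a + b - a * b * ρ)) := by
      ring
    linarith
  have heq : (K * 1 * ρ ^ 2 + (2 - K) * 1 ^ 2 * ρ ^ 2 * (1 - ρ)) / (2 * (1 - ρ) * (1 - 1 * ρ)) =
      (K * ρ ^ 2 + (2 - K) * ρ ^ 2 * (1 - ρ)) / (2 * (1 - ρ) ^ 2) := by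
    ring_nf
  refine ⟨hmono, ?_, heq⟩
  intro φ hφ
  have h := hmono hφ (Set.mem_Icc.mpr ⟨by norm_num, le_refl 1⟩) hφ.2
  calc (K * φ * ρ ^ 2 + (2 - K) * φ ^ 2 * ρ ^ 2 * (1 - ρ)) / (2 * (1 - ρ) * (1 - φ * ρ))
      ≤ (K * 1 * ρ ^ 2 + (2 - K) * 1 ^ 2 * ρ ^ 2 * (1 - ρ)) / (2 * (1 - ρ) * (1 - 1 * ρ)) := h
    _ = (K * ρ ^ 2 + (2 - K) * ρ ^ 2 * (1 - ρ)) / (2 * (1 - ρ) ^ 2) := heq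
end

section
/- Let K > 4 and 0 < ρ < 3/2 − (1/2)√((5K−2)/(K−2)), and let φ^max = (1/ρ)·(1 − √((K−2−2ρ(K−1)) / ((K−2)(1−ρ)))). Then the maximum preemptive-resume revenue satisfies ℛ_PR(φ^max) = (2(K−2) − ρ(3K−4)) / (2(1−ρ)) − (K−2)·√((K−2−2ρ(K−1)) / ((K−2)(1−ρ))), where ℛ_PR(φ) = (Kφρ² + (2−K)φ²ρ²(1−ρ)) / (2(1−ρ)(1−φρ)). -/
/-- Let `K > 4` and `0 < ρ < 3/2 − (1/2)√((5K−2)/(K−2))`, and let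
`φ^max = (1/ρ)(1 − √((K−2−2ρ(K−1))/((K−2)(1−ρ))))`. Then
`ℛ_PR(φ^max) = (2(K−2) − ρ(3K−4))/(2(1−ρ)) − (K−2)√((K−2−2ρ(K−1))/((K−2)(1−ρ)))`. -/
theorem revenue_PR_max_value (ρ K : ℝ) (hρ0 : 0 < ρ) (hK : 4 < K)
    (hρK : ρ < 3 / 2 - (1 / 2) * Real.sqrt ((5 * K - 2) / (K - 2))) :
    (K * (1 / ρ * (1 - Real.sqrt ((K - 2 - 2 * ρ * (K - 1)) / ((K - 2) * (1 - ρ))))) * ρ ^ 2 +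
      (2 - K) *
        (1 / ρ * (1 - Real.sqrt ((K - 2 - 2 * ρ * (K - 1)) / ((K - 2) * (1 - ρ))))) ^ 2
        * ρ ^ 2 * (1 - ρ)) /
      (2 * (1 - ρ) *
        (1 - (1 / ρ * (1 - Real.sqrt ((K - 2 - 2 * ρ * (K - 1)) / ((K - 2) * (1 - ρ))))) * ρ))
    = (2 * (K - 2) - ρ * (3 * K - 4)) / (2 * (1 - ρ)) -
        (K - 2) * Real.sqrt ((K - 2 - 2 * ρ * (K - 1)) / ((K - 2) * (1 - ρ))) := by
  have hK2 : (0:ℝ) < K - 2 := by linarith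
  set t := Real.sqrt ((5 * K - 2) / (K - 2)) with ht
  have ht0 : 0 ≤ t := Real.sqrt_nonneg _
  have ht2 : t ^ 2 = (5 * K - 2) / (K - 2) :=
    Real.sq_sqrt (div_nonneg (by linarith) hK2.le)
  have ht2' : t ^ 2 * (K - 2) = 5 * K - 2 := by
    rw [ht2]; field_simp
  have hρ1 : ρ < 1 / 2 := by
    by_contra h; push_neg at h
    have h4 : t ^ 2 < 4 := by nlinarith
    nlinarith [mul_pos (by linarith : (0:ℝ) < 4 - t ^ 2) hK2]
  have hnum : 0 < K - 2 - 2 * ρ * (K - 1) := by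
    by_contra h; push_neg at h
    have h1 : t * (K - 1) < 2 * K - 1 := by nlinarith
    have h2 : (t * (K - 1)) ^ 2 < (2 * K - 1) ^ 2 := by
      nlinarith [mul_nonneg ht0 (by linarith : (0:ℝ) ≤ K - 1)]
    have h3 : t ^ 2 * (K - 2) * (K - 1) ^ 2 = (5 * K - 2) * (K - 1) ^ 2 := by
      linear_combination (K - 1) ^ 2 * ht2'
    nlinarith [mul_lt_mul_of_pos_right h2 hK2]
  have h1ρ : (0:ℝ) < 1 - ρ := by linarith
  have hA : 0 < (K - 2 - 2 * ρ * (K - 1)) / ((K - 2) * (1 - ρ)) := by positivity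
  set s := Real.sqrt ((K - 2 - 2 * ρ * (K - 1)) / ((K - 2) * (1 - ρ))) with hs
  have hs0 : 0 < s := Real.sqrt_pos.mpr hA
  have hs2 : s ^ 2 * ((K - 2) * (1 - ρ)) = K - 2 - 2 * ρ * (K - 1) := by
    rw [hs, Real.sq_sqrt hA.le]; field_simp
  have hρne : ρ ≠ 0 := ne_of_gt hρ0
  have h1ρne : (1:ℝ) - ρ ≠ 0 := ne_of_gt h1ρ
  have hsne : s ≠ 0 := ne_of_gt hs0
  field_simp
  rw [sub_sub_cancel, div_eq_iff hsne]
  ring_nf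
  linear_combination hs2
end

section
/- For every real K > 4, the inequality 3/2 − (1/2)√((5K−2)/(K−2)) < (K−2)/(2K−2) holds. Consequently, whenever K > 4 and ρ ∈ (0, 3/2 − (1/2)√((5K−2)/(K−2))) (the regime in which the PR revenue function is unimodal), one also has ρ < (K−2)/(2K−2) (the regime in which the PR cost function 𝒞_PR(φ) = (Kρ + (2−K)φρ(1−ρ))/(2μ(1−ρ)(1−φρ)) is monotone decreasing, which makes the revenue-maximizing mixed equilibrium stable). -/
/-- For every `K > 4`,
`3/2 − (1/2)√((5K−2)/(K−2)) < (K−2)/(2K−2)`; consequently, whenever `K > 4` and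
`ρ ∈ (0, 3/2 − (1/2)√((5K−2)/(K−2)))`, one also has `ρ < (K−2)/(2K−2)`. -/
theorem unimodal_implies_stable (K : ℝ) (hK : 4 < K) :
    (3 / 2 - (1 / 2) * Real.sqrt ((5 * K - 2) / (K - 2)) < (K - 2) / (2 * K - 2)) ∧
    ∀ ρ : ℝ, 0 < ρ → ρ < 3 / 2 - (1 / 2) * Real.sqrt ((5 * K - 2) / (K - 2)) →
      ρ < (K - 2) / (2 * K - 2) := by
  have h1 : (0:ℝ) < K - 1 := by linarith
  have h2 : (0:ℝ) < K - 2 := by linarith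
  have hc : (0:ℝ) ≤ (2 * K - 1) / (K - 1) := div_nonneg (by linarith) (by linarith)
  have hs : (2 * K - 1) / (K - 1) < Real.sqrt ((5 * K - 2) / (K - 2)) := by
    rw [show ((2 * K - 1) / (K - 1)) = Real.sqrt (((2 * K - 1) / (K - 1)) ^ 2) from
      (Real.sqrt_sq hc).symm]
    apply Real.sqrt_lt_sqrt (by positivity)
    rw [div_pow, div_lt_div_iff₀ (by positivity) h2]
    nlinarith [pow_pos (by linarith : (0:ℝ) < K) 3]
  have hmain : 3 / 2 - (1 / 2) * Real.sqrt ((5 * K - 2) / (K - 2)) < (K - 2) / (2 * K - 2) := by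
    have : (K - 2) / (2 * K - 2) = 3 / 2 - (1 / 2) * ((2 * K - 1) / (K - 1)) := by
      have h3 : (2 * K - 2 : ℝ) ≠ 0 := by linarith
      have h4 : (K - 1 : ℝ) ≠ 0 := by linarith
      field_simp
      ring
    rw [this]
    linarith
  exact ⟨hmain, fun ρ _ hρ => lt_trans hρ hmain⟩
end

section
/- (Theorem 2 of the paper.) For every ρ ∈ (0,1) and K ≥ 1, the maximum revenue under the preemptive-resume policy strictly exceeds the maximum revenue under the non-preemptive policy: sup over φ ∈ [0,1] of ℛ_PR(φ) > sup over φ ∈ [0,1] of ℛ_NP(φ), where ℛ_NP(φ) = Kρ³φ / (2(1−ρ)(1−φρ)) and ℛ_PR(φ) = (Kφρ² + (2−K)φ²ρ²(1−ρ)) / (2(1−ρ)(1−φρ)). -/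
/-- Theorem 2 of the paper: For every `ρ ∈ (0,1)` and `K ≥ 1`, the maximum
revenue under the preemptive-resume policy strictly exceeds the maximum revenue under the
non-preemptive policy: `sup_{φ∈[0,1]} ℛ_PR(φ) > sup_{φ∈[0,1]} ℛ_NP(φ)`. -/
theorem max_revenue_PR_gt_NP (ρ K : ℝ) (hρ0 : 0 < ρ) (hρ1 : ρ < 1) (hK : 1 ≤ K) :
    sSup ((fun φ : ℝ =>
        (K * φ * ρ ^ 2 + (2 - K) * φ ^ 2 * ρ ^ 2 * (1 - ρ)) / (2 * (1 - ρ) * (1 - φ * ρ)))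
        '' Set.Icc (0 : ℝ) 1) >
      sSup ((fun φ : ℝ => K * ρ ^ 3 * φ / (2 * (1 - ρ) * (1 - φ * ρ)))
        '' Set.Icc (0 : ℝ) 1) := by
  set fNP := fun φ : ℝ => K * ρ ^ 3 * φ / (2 * (1 - ρ) * (1 - φ * ρ)) with hfNP
  set fPR := fun φ : ℝ =>
    (K * φ * ρ ^ 2 + (2 - K) * φ ^ 2 * ρ ^ 2 * (1 - ρ)) / (2 * (1 - ρ) * (1 - φ * ρ)) with hfPR
  have h1ρ : (0:ℝ) < 1 - ρ := by linarith
  have hdenpos : ∀ φ ∈ Set.Icc (0:ℝ) 1, 0 < 2 * (1 - ρ) * (1 - φ * ρ) := by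
    intro φ hφ
    obtain ⟨h0, h1⟩ := hφ
    nlinarith [mul_nonneg (by linarith : (0:ℝ) ≤ 1 - φ) hρ0.le]
  -- PR is continuous on [0,1], hence its image is bounded above
  have hcont : ContinuousOn fPR (Set.Icc (0:ℝ) 1) := by
    apply ContinuousOn.div
    · fun_prop
    · fun_prop
    · intro φ hφ; exact (hdenpos φ hφ).ne'
  have hbdd : BddAbove (fPR '' Set.Icc (0:ℝ) 1) :=
    (isCompact_Icc.image_of_continuousOn hcont).bddAbove
  have hmem1 : (1:ℝ) ∈ Set.Icc (0:ℝ) 1 := by norm_num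
  have hPRle : fPR 1 ≤ sSup (fPR '' Set.Icc (0:ℝ) 1) :=
    le_csSup hbdd ⟨1, hmem1, rfl⟩
  have hNPle : sSup (fNP '' Set.Icc (0:ℝ) 1) ≤ fNP 1 := by
    apply csSup_le ((Set.nonempty_Icc.mpr zero_le_one).image fNP)
    rintro x ⟨φ, hφ, rfl⟩
    obtain ⟨h0, h1⟩ := hφ
    have hd1 := hdenpos φ ⟨h0, h1⟩
    have hd2 := hdenpos 1 hmem1
    simp only [hfNP]
    rw [div_le_div_iff₀ hd1 hd2]
    nlinarith [mul_nonneg (mul_nonneg (mul_nonneg (by linarith : (0:ℝ) ≤ K) (pow_pos hρ0 3).le) h1ρ.le) (by linarith : (0:ℝ) ≤ 1 - φ)]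
  have hlt : fNP 1 < fPR 1 := by
    simp only [hfNP, hfPR]
    have hd2 := hdenpos 1 hmem1
    rw [div_lt_div_iff₀ hd2 hd2]
    nlinarith [mul_pos (mul_pos (mul_pos two_pos (pow_pos hρ0 2)) h1ρ) hd2]
  calc sSup (fNP '' Set.Icc (0:ℝ) 1) ≤ fNP 1 := hNPle
    _ < fPR 1 := hlt
    _ ≤ sSup (fPR '' Set.Icc (0:ℝ) 1) := hPRle
end

section
/- Let μ > 0, ρ ∈ (0,1), and 1 ≤ K < 2. Then the preemptive-resume social welfare function 𝒮_PR(φ) = ρ(K − 2φρ + (2−K)φ(1 − φ(1−ρ))) / (2μ(1−ρ)(1−φρ)) satisfies 𝒮_PR(0) = 𝒮_PR(1) = Kρ/(2μ(1−ρ)), and 𝒮_PR(φ) > Kρ/(2μ(1−ρ)) for every φ ∈ (0,1); that is, the socially optimal (welfare-cost-minimizing) states are exactly the pure states φ = 0 and φ = 1. -/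
/-- Let `μ > 0`, `ρ ∈ (0,1)`, and `1 ≤ K < 2`. Then the PR social welfare
function `𝒮_PR(φ) = ρ(K − 2φρ + (2−K)φ(1 − φ(1−ρ))) / (2μ(1−ρ)(1−φρ))` satisfies
`𝒮_PR(0) = 𝒮_PR(1) = Kρ/(2μ(1−ρ))` and `𝒮_PR(φ) > Kρ/(2μ(1−ρ))` for every `φ ∈ (0,1)`;
the socially optimal states are exactly the pure states `φ = 0` and `φ = 1`. -/
theorem welfare_PR_Klt2 (μ ρ K : ℝ) (hμ : 0 < μ) (hρ0 : 0 < ρ) (hρ1 : ρ < 1)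
    (hK1 : 1 ≤ K) (hK2 : K < 2) :
    (ρ * (K - 2 * 0 * ρ + (2 - K) * 0 * (1 - 0 * (1 - ρ))) / (2 * μ * (1 - ρ) * (1 - 0 * ρ)) =
      K * ρ / (2 * μ * (1 - ρ))) ∧
    (ρ * (K - 2 * 1 * ρ + (2 - K) * 1 * (1 - 1 * (1 - ρ))) / (2 * μ * (1 - ρ) * (1 - 1 * ρ)) =
      K * ρ / (2 * μ * (1 - ρ))) ∧
    ∀ φ ∈ Set.Ioo (0 : ℝ) 1,
      ρ * (K - 2 * φ * ρ + (2 - K) * φ * (1 - φ * (1 - ρ))) / (2 * μ * (1 - ρ) * (1 - φ * ρ)) >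
        K * ρ / (2 * μ * (1 - ρ)) := by
  have h1ρ : 0 < 1 - ρ := by linarith
  have hd : 0 < 2 * μ * (1 - ρ) := by positivity
  refine ⟨by ring_nf, ?_, ?_⟩
  · have hρne : ρ ≠ 0 := ne_of_gt hρ0
    field_simp
    ring
  · intro φ hφ
    obtain ⟨hφ0, hφ1⟩ := hφ
    have hφρ : 0 < 1 - φ * ρ := by nlinarith
    have hd2 : 0 < 2 * μ * (1 - ρ) * (1 - φ * ρ) := by positivity
    rw [gt_iff_lt, div_lt_div_iff₀ hd hd2]
    nlinarith [mul_pos (mul_pos (mul_pos hφ0 (by linarith : (0:ℝ) < 2 - K)) h1ρ) (by linarith : (0:ℝ) < 1 - φ), mul_pos hρ0 hμ, mul_pos (mul_pos hρ0 hμ) h1ρ]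
end

section
/- Let μ > 0, ρ ∈ (0,1), and K > 2. Then φ* = (1 − √(1−ρ))/ρ lies in (0,1), and it is the unique minimizer of the preemptive-resume social welfare function 𝒮_PR(φ) = ρ(K − 2φρ + (2−K)φ(1 − φ(1−ρ))) / (2μ(1−ρ)(1−φρ)) over [0,1]: 𝒮_PR(φ*) < 𝒮_PR(φ) for every φ ∈ [0,1] with φ ≠ φ*. In particular, when K > 2 the socially optimal state is the mixed ('some join') state φ*, and the all-join state φ = 1 and none-join state φ = 0 are not socially optimal. -/
/-- Let `μ > 0`, `ρ ∈ (0,1)`, and `K > 2`. Then `φ* = (1 − √(1−ρ))/ρ` lies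
in `(0,1)`, and it is the unique minimizer of the PR social welfare function
`𝒮_PR(φ) = ρ(K − 2φρ + (2−K)φ(1 − φ(1−ρ))) / (2μ(1−ρ)(1−φρ))` over `[0,1]`. -/
theorem welfare_PR_Kgt2 (μ ρ K : ℝ) (hμ : 0 < μ) (hρ0 : 0 < ρ) (hρ1 : ρ < 1)
    (hK : 2 < K) :
    ((1 - Real.sqrt (1 - ρ)) / ρ) ∈ Set.Ioo (0 : ℝ) 1 ∧
    ∀ φ ∈ Set.Icc (0 : ℝ) 1, φ ≠ (1 - Real.sqrt (1 - ρ)) / ρ →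
      ρ * (K - 2 * ((1 - Real.sqrt (1 - ρ)) / ρ) * ρ +
          (2 - K) * ((1 - Real.sqrt (1 - ρ)) / ρ) *
            (1 - ((1 - Real.sqrt (1 - ρ)) / ρ) * (1 - ρ))) /
        (2 * μ * (1 - ρ) * (1 - ((1 - Real.sqrt (1 - ρ)) / ρ) * ρ)) <
      ρ * (K - 2 * φ * ρ + (2 - K) * φ * (1 - φ * (1 - ρ))) /
        (2 * μ * (1 - ρ) * (1 - φ * ρ)) := by
  have hρ' : (0:ℝ) < 1 - ρ := by linarith
  set s := Real.sqrt (1 - ρ) with hsdef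
  have hs0 : 0 < s := Real.sqrt_pos.mpr hρ'
  have hs2 : s ^ 2 = 1 - ρ := Real.sq_sqrt hρ'.le
  have hs1 : s < 1 := by nlinarith
  have h1s : (0:ℝ) < 1 + s := by linarith
  have hρeq : ρ = 1 - s ^ 2 := by linarith
  have hφstar : (1 - s) / ρ = 1 / (1 + s) := by
    rw [hρeq]; rw [div_eq_div_iff (by nlinarith) (ne_of_gt h1s)]; ring
  have hA : 1 - (1 - s) / ρ * ρ = s := by
    field_simp
    ring
  constructor
  · rw [hφstar]
    constructor
    · positivity
    · rw [div_lt_one h1s]; linarith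
  · intro φ hφIcc hφne
    obtain ⟨hφ0, hφ1⟩ := hφIcc
    have hden1 : 0 < 1 - φ * ρ := by nlinarith
    rw [hA, hφstar] at *
    have hne : (1 + s) * φ - 1 ≠ 0 := by
      intro h
      apply hφne
      field_simp
      linarith
    have hsq : 0 < ((1 + s) * φ - 1) ^ 2 := by positivity
    rw [div_lt_div_iff₀ (by positivity) (by positivity)]
    rw [hρeq]
    have h1s' : (1 + s) ≠ 0 := by positivity
    field_simp
    nlinarith [mul_pos (sub_pos.mpr hK)
      (mul_pos (mul_pos (pow_pos hs0 3) h1s)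
        (mul_pos (sub_pos.mpr hs1) hsq))]
end

section
/- Let ρ ∈ (0,1) and 2 < K ≤ 4. Then the revenue-maximizing state under the preemptive-resume policy, φ = 1 (the unique maximizer of ℛ_PR(φ) = (Kφρ² + (2−K)φ²ρ²(1−ρ)) / (2(1−ρ)(1−φρ)) over [0,1]), is a social-welfare worst case: 𝒮_PR(1) ≥ 𝒮_PR(φ) for all φ ∈ [0,1], where 𝒮_PR(φ) = ρ(K − 2φρ + (2−K)φ(1 − φ(1−ρ))) / (2μ(1−ρ)(1−φρ)) for any fixed μ > 0. -/
/-- Let `ρ ∈ (0,1)` and `2 < K ≤ 4`. Then the revenue-maximizing state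
`φ = 1` (the unique maximizer of `ℛ_PR` over `[0,1]`) is a social-welfare worst case:
`𝒮_PR(1) ≥ 𝒮_PR(φ)` for all `φ ∈ [0,1]` and any fixed `μ > 0`. -/
theorem revenue_max_is_welfare_worst (ρ K μ : ℝ) (hρ0 : 0 < ρ) (hρ1 : ρ < 1)
    (hK2 : 2 < K) (hK4 : K ≤ 4) (hμ : 0 < μ) :
    (∀ φ ∈ Set.Icc (0 : ℝ) 1, φ ≠ 1 →
      (K * φ * ρ ^ 2 + (2 - K) * φ ^ 2 * ρ ^ 2 * (1 - ρ)) / (2 * (1 - ρ) * (1 - φ * ρ)) <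
        (K * 1 * ρ ^ 2 + (2 - K) * 1 ^ 2 * ρ ^ 2 * (1 - ρ)) / (2 * (1 - ρ) * (1 - 1 * ρ))) ∧
    ∀ φ ∈ Set.Icc (0 : ℝ) 1,
      ρ * (K - 2 * φ * ρ + (2 - K) * φ * (1 - φ * (1 - ρ))) /
          (2 * μ * (1 - ρ) * (1 - φ * ρ)) ≤
        ρ * (K - 2 * 1 * ρ + (2 - K) * 1 * (1 - 1 * (1 - ρ))) /
          (2 * μ * (1 - ρ) * (1 - 1 * ρ)) := by
  constructor
  · rintro φ ⟨h0, h1⟩ hne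
    have hφ1 : φ < 1 := lt_of_le_of_ne h1 hne
    have hd1 : 0 < 2 * (1 - ρ) * (1 - φ * ρ) := by
      have : φ * ρ < 1 := lt_of_le_of_lt (by nlinarith) hρ1
      nlinarith
    have hd2 : 0 < 2 * (1 - ρ) * (1 - 1 * ρ) := by nlinarith
    rw [div_lt_div_iff₀ hd1 hd2]
    have ht2 : (1 - ρ) * (1 + φ * (1 - ρ)) < 2 := by nlinarith
    have ht0 : 0 < (1 - ρ) * (1 + φ * (1 - ρ)) := by nlinarith
    have hinner : 0 < K + (2 - K) * ((1 - ρ) * (1 + φ * (1 - ρ))) := by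
      nlinarith [mul_pos (show (0:ℝ) < K - 2 by linarith)
        (show (0:ℝ) < 2 - (1 - ρ) * (1 + φ * (1 - ρ)) by linarith)]
    have key : 0 < (1 - ρ) *
        (ρ ^ 2 * ((1 - φ) * (K + (2 - K) * ((1 - ρ) * (1 + φ * (1 - ρ)))))) :=
      mul_pos (by linarith) (mul_pos (pow_pos hρ0 2)
        (mul_pos (by linarith) hinner))
    nlinarith [key]
  · rintro φ ⟨h0, h1⟩
    have hφρ : φ * ρ < 1 := lt_of_le_of_lt (by nlinarith) hρ1
    have hd1 : 0 < 2 * μ * (1 - ρ) * (1 - φ * ρ) :=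
      mul_pos (mul_pos (mul_pos two_pos hμ) (by linarith)) (by linarith)
    have hd2 : 0 < 2 * μ * (1 - ρ) * (1 - 1 * ρ) :=
      mul_pos (mul_pos (mul_pos two_pos hμ) (by linarith)) (by linarith)
    rw [div_le_div_iff₀ hd1 hd2]
    have key : 0 ≤ (K - 2) * φ * (1 - φ) * (1 - ρ) ^ 2 * ρ * μ :=
      mul_nonneg (mul_nonneg (mul_nonneg (mul_nonneg (mul_nonneg (by linarith) h0)
        (by linarith)) (sq_nonneg _)) hρ0.le) hμ.le
    nlinarith [key]
end
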